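/- Let M, N ≥ 1 and let μ be an atomless probability measure on ℝ. Then for almost every Φ ∈ ℝ^{M×N} with respect to the product measure μ^{⊗(M×N)} (entries i.i.d. from μ), the map x ↦ Φx is injective on ℤ₊^N: for all x, x' ∈ ℤ₊^N with Φx = Φx', one has x = x'. -/

import Mathlib

open MeasureTheory

/-- A (non-coordinate) hyperplane `{r | ∑ n, r n * v n = 0}` with `v ≠ 0` is null
for a product of atomless probability measures. -/
lemma hyperplane_null (N : ℕ) (μ : Measure ℝ) [IsProbabilityMeasure μ] [NullSingletonClass μ]
    (v : Fin N → ℝ) (n₀ : Fin N) (hv : v n₀ ≠ 0) :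
    (Measure.pi fun _ : Fin N => μ) {r : Fin N → ℝ | ∑ n, r n * v n = 0} = 0 := by
  classical
  set S : Set (Fin N → ℝ) := {r : Fin N → ℝ | ∑ n, r n * v n = 0} with hS
  have hmeas : MeasurableSet S := by
    have : Measurable fun r : Fin N → ℝ => ∑ n, r n * v n :=
      Finset.measurable_sum _ fun n _ => (measurable_pi_apply n).mul_const _
    exact measurableSet_eq_fun this measurable_const
  set p : Fin N → Prop := fun n => n ≠ n₀ with hp
  have hpres := MeasureTheory.measurePreserving_piEquivPiSubtypeProd
    (fun _ : Fin N => μ) p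
  set e := MeasurableEquiv.piEquivPiSubtypeProd (fun _ : Fin N => ℝ) p with he
  have hsymm := hpres.symm e
  have hkey : ((Measure.pi fun _ : {n // p n} => μ).prod
      (Measure.pi fun _ : {n // ¬ p n} => μ)) (e.symm ⁻¹' S)
      = (Measure.pi fun _ : Fin N => μ) S :=
    hsymm.measure_preimage hmeas.nullMeasurableSet
  rw [← hkey]
  have hmeas' : MeasurableSet (e.symm ⁻¹' S) := e.symm.measurable hmeas
  rw [MeasureTheory.Measure.measure_prod_null hmeas']
  refine Filter.Eventually.of_forall fun x => ?_
  -- the slice over `x` is contained in a coordinate hyperplane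
  set j : {n // ¬ p n} := ⟨n₀, by simp [hp]⟩ with hj
  set c : ℝ := ∑ n ∈ Finset.univ.erase n₀,
      (if h : p n then x ⟨n, h⟩ else 0) * v n with hc
  have hsub : (Prod.mk x ⁻¹' (e.symm ⁻¹' S)) ⊆ {y : {n // ¬ p n} → ℝ | y j = -c / v n₀} := by
    intro y hy
    simp only [Set.mem_preimage, hS, Set.mem_setOf_eq, he,
      MeasurableEquiv.piEquivPiSubtypeProd_symm_apply] at hy
    have hsum : ∑ n, (if h : p n then x ⟨n, h⟩ else y ⟨n, h⟩) * v n
        = c + y j * v n₀ := by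
      rw [← Finset.sum_erase_add _ _ (Finset.mem_univ n₀)]
      have h₁ : ∀ n ∈ Finset.univ.erase n₀,
          (if h : p n then x ⟨n, h⟩ else y ⟨n, h⟩) * v n
          = (if h : p n then x ⟨n, h⟩ else 0) * v n := by
        intro n hn
        have hpn : p n := (Finset.mem_erase.1 hn).1
        rw [dif_pos hpn, dif_pos hpn]
      rw [Finset.sum_congr rfl h₁]
      have hpn₀ : ¬ p n₀ := by simp [hp]
      rw [dif_neg hpn₀]
    rw [hsum] at hy
    have : y j * v n₀ = -c := by linarith
    show y j = -c / v n₀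
    rw [eq_div_iff hv]
    linarith
  exact measure_mono_null hsub (Measure.pi_hyperplane _ j _)

/-- for almost every matrix `Φ` with i.i.d. atomless entries,
the map `x ↦ Φx` is injective on `ℤ₊^N`. -/
theorem stmt_1 (M N : ℕ) (hM : 1 ≤ M) (hN : 1 ≤ N)
    (μ : Measure ℝ) [IsProbabilityMeasure μ] [NullSingletonClass μ] :
    ∀ᵐ Φ ∂(Measure.pi fun _ : Fin M => Measure.pi fun _ : Fin N => μ),
      ∀ x x' : Fin N → ℕ,
        Matrix.mulVec (Matrix.of Φ) (fun n => (x n : ℝ))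
          = Matrix.mulVec (Matrix.of Φ) (fun n => (x' n : ℝ)) → x = x' := by
  rw [MeasureTheory.ae_all_iff]
  intro x
  rw [MeasureTheory.ae_all_iff]
  intro x'
  by_cases hxx : x = x'
  · exact Filter.Eventually.of_forall fun Φ _ => hxx
  · set v : Fin N → ℝ := fun n => (x n : ℝ) - (x' n : ℝ) with hv
    obtain ⟨n₀, hn₀⟩ : ∃ n, x n ≠ x' n := Function.ne_iff.1 hxx
    have hvn₀ : v n₀ ≠ 0 := by
      simp only [hv, sub_ne_zero]
      exact_mod_cast hn₀
    set m₀ : Fin M := ⟨0, hM⟩ with hm₀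
    have hnull := hyperplane_null N μ v n₀ hvn₀
    have haes : {r : Fin N → ℝ | ∑ n, r n * v n = 0}ᶜ
        ∈ ae (Measure.pi fun _ : Fin N => μ) := compl_mem_ae_iff.2 hnull
    have hmain' : (Function.eval m₀ ⁻¹' {r : Fin N → ℝ | ∑ n, r n * v n = 0}ᶜ)
        ∈ ae (Measure.pi fun _ : Fin M => Measure.pi fun _ : Fin N => μ) :=
      Filter.mem_map.1 (MeasureTheory.Measure.tendsto_eval_ae_ae (i := m₀) haes)
    have hmain : ∀ᵐ Φ ∂(Measure.pi fun _ : Fin M => Measure.pi fun _ : Fin N => μ),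
        ∑ n, Φ m₀ n * v n ≠ 0 := hmain'
    filter_upwards [hmain] with Φ hΦ hEq
    exfalso
    apply hΦ
    have h0 := congrFun hEq m₀
    simp only [Matrix.mulVec, dotProduct, Matrix.of_apply] at h0
    simp only [hv, mul_sub, Finset.sum_sub_distrib]
    rw [h0]
    ring
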